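/- For each s with 1 ≤ s ≤ n-1, the number of sequences (p_1,...,p_n) ∈ ℕ^n satisfying p_t ≤ t for all t < s, p_s = s, p_j < j for all j > s, and p_j = 0 for at least one j > s, equals (n-s)·(n-1)!. -/

import Mathlib

open Finset

private lemma prod_add_two (m : ℕ) :
    ∏ i ∈ Finset.range m, (i + 2) = (m + 1).factorial := by
  induction m with
  | zero => simp
  | succ k ih =>
    rw [Finset.prod_range_succ, ih, mul_comm]
    exact (Nat.factorial_succ (k + 1)).symm

private lemma prod_c (s : ℕ) (hs : 1 ≤ s) :
    ∀ n, s ≤ n →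
      (∏ i ∈ Finset.range n,
        (if i + 1 < s then i + 2 else if i + 1 = s then 1 else i + 1)) = n.factorial := by
  refine Nat.le_induction ?_ ?_
  · obtain ⟨t, rfl⟩ : ∃ t, s = t + 1 := ⟨s - 1, (Nat.succ_pred_eq_of_pos hs).symm⟩
    rw [Finset.prod_range_succ]
    have h1 : (∏ i ∈ Finset.range t,
        (if i + 1 < t + 1 then i + 2 else if i + 1 = t + 1 then 1 else i + 1))
        = ∏ i ∈ Finset.range t, (i + 2) := by
      refine Finset.prod_congr rfl fun i hi => ?_
      have := Finset.mem_range.mp hi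
      simp [Nat.add_lt_add_right this 1]
    rw [h1, prod_add_two]
    simp
  · intro n hn ih
    rw [Finset.prod_range_succ, ih]
    have h1 : ¬ (n + 1 < s) := by omega
    have h2 : ¬ (n + 1 = s) := by omega
    rw [if_neg h1, if_neg h2, Nat.factorial_succ]
    ring

private lemma prod_d (s : ℕ) (hs : 1 ≤ s) :
    ∀ n, s ≤ n →
      (∏ i ∈ Finset.range n,
        (if i + 1 < s then i + 2 else if i + 1 = s then 1 else i)) = s * (n - 1).factorial := by
  refine Nat.le_induction ?_ ?_
  · obtain ⟨t, rfl⟩ : ∃ t, s = t + 1 := ⟨s - 1, (Nat.succ_pred_eq_of_pos hs).symm⟩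
    rw [Finset.prod_range_succ]
    have h1 : (∏ i ∈ Finset.range t,
        (if i + 1 < t + 1 then i + 2 else if i + 1 = t + 1 then 1 else i))
        = ∏ i ∈ Finset.range t, (i + 2) := by
      refine Finset.prod_congr rfl fun i hi => ?_
      have := Finset.mem_range.mp hi
      simp [Nat.add_lt_add_right this 1]
    rw [h1, prod_add_two]
    simp [Nat.factorial_succ]
  · intro n hn ih
    rw [Finset.prod_range_succ, ih]
    have h1 : ¬ (n + 1 < s) := by omega
    have h2 : ¬ (n + 1 = s) := by omega
    rw [if_neg h1, if_neg h2]
    have h3 : n - 1 + 1 = n := by omega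
    have h4 : n + 1 - 1 = n := by omega
    rw [h4]
    calc s * (n - 1).factorial * n = s * ((n - 1).factorial * n) := by ring
    _ = s * n.factorial := by
        rw [mul_comm (n-1).factorial n]
        congr 1
        conv_rhs => rw [← h3]
        rw [Nat.factorial_succ, h3]

theorem card_seq_with_fixed_s (n s : ℕ) (hs1 : 1 ≤ s) (hs2 : s ≤ n - 1) :
    Set.ncard {p : Fin n → ℕ |
      (∀ i : Fin n, (i : ℕ) + 1 < s → p i ≤ (i : ℕ) + 1) ∧
      (∀ i : Fin n, (i : ℕ) + 1 = s → p i = s) ∧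
      (∀ i : Fin n, s < (i : ℕ) + 1 → p i < (i : ℕ) + 1) ∧
      (∃ i : Fin n, s < (i : ℕ) + 1 ∧ p i = 0)} =
    (n - s) * (n - 1).factorial := by
  classical
  have hn : s + 1 ≤ n := by omega
  set F : Fin n → Finset ℕ := fun i =>
    if (i : ℕ) + 1 < s then Finset.range ((i : ℕ) + 2)
    else if (i : ℕ) + 1 = s then {s}
    else Finset.range ((i : ℕ) + 1) with hF
  set G : Fin n → Finset ℕ := fun i =>
    if (i : ℕ) + 1 < s then Finset.range ((i : ℕ) + 2)
    else if (i : ℕ) + 1 = s then {s}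
    else Finset.Ico 1 ((i : ℕ) + 1) with hG
  have hGF : Fintype.piFinset G ⊆ Fintype.piFinset F := by
    intro p hp
    rw [Fintype.mem_piFinset] at hp ⊢
    intro i
    have := hp i
    simp only [hF, hG] at this ⊢
    split_ifs at this ⊢ with h1 h2
    · exact this
    · exact this
    · rw [Finset.mem_Ico] at this
      rw [Finset.mem_range]
      exact this.2
  have hFmem : ∀ (p : Fin n → ℕ), p ∈ Fintype.piFinset F ↔
      ((∀ i : Fin n, (i : ℕ) + 1 < s → p i ≤ (i : ℕ) + 1) ∧
       (∀ i : Fin n, (i : ℕ) + 1 = s → p i = s) ∧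
       (∀ i : Fin n, s < (i : ℕ) + 1 → p i < (i : ℕ) + 1)) := by
    intro p
    rw [Fintype.mem_piFinset]
    constructor
    · intro h
      refine ⟨fun i hi => ?_, fun i hi => ?_, fun i hi => ?_⟩
      · have := h i; simp only [hF, if_pos hi] at this
        rw [Finset.mem_range] at this; omega
      · have := h i; simp only [hF, if_neg (by omega : ¬ ((i:ℕ)+1 < s)), if_pos hi] at this
        rwa [Finset.mem_singleton] at this
      · have := h i
        simp only [hF, if_neg (by omega : ¬ ((i:ℕ)+1 < s)),
          if_neg (by omega : ¬ ((i:ℕ)+1 = s))] at this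
        rwa [Finset.mem_range] at this
    · rintro ⟨h1, h2, h3⟩ i
      simp only [hF]
      split_ifs with ha hb
      · rw [Finset.mem_range]; exact Nat.lt_succ_of_le (h1 i ha)
      · rw [Finset.mem_singleton]; exact h2 i hb
      · rw [Finset.mem_range]; exact h3 i (by omega)
  have hGmem : ∀ (p : Fin n → ℕ), p ∈ Fintype.piFinset F →
      (p ∈ Fintype.piFinset G ↔ ¬ ∃ i : Fin n, s < (i : ℕ) + 1 ∧ p i = 0) := by
    intro p hp
    rw [Fintype.mem_piFinset] at hp ⊢
    constructor
    · rintro h ⟨i, hi, hpi⟩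
      have := h i
      simp only [hG, if_neg (by omega : ¬ ((i:ℕ)+1 < s)),
        if_neg (by omega : ¬ ((i:ℕ)+1 = s)), Finset.mem_Ico] at this
      omega
    · intro h i
      have hpi := hp i
      simp only [hF] at hpi
      simp only [hG]
      split_ifs at hpi ⊢ with h1 h2
      · exact hpi
      · exact hpi
      · rw [Finset.mem_range] at hpi
        rw [Finset.mem_Ico]
        have : p i ≠ 0 := fun h0 => h ⟨i, by omega, h0⟩
        omega
  have hset : {p : Fin n → ℕ |
      (∀ i : Fin n, (i : ℕ) + 1 < s → p i ≤ (i : ℕ) + 1) ∧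
      (∀ i : Fin n, (i : ℕ) + 1 = s → p i = s) ∧
      (∀ i : Fin n, s < (i : ℕ) + 1 → p i < (i : ℕ) + 1) ∧
      (∃ i : Fin n, s < (i : ℕ) + 1 ∧ p i = 0)} =
      ↑(Fintype.piFinset F \ Fintype.piFinset G) := by
    ext p
    simp only [Set.mem_setOf_eq, Finset.coe_sdiff, Set.mem_diff, Finset.mem_coe]
    constructor
    · rintro ⟨h1, h2, h3, h4⟩
      have hpF : p ∈ Fintype.piFinset F := (hFmem p).mpr ⟨h1, h2, h3⟩
      exact ⟨hpF, fun hg => (hGmem p hpF).mp hg h4⟩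
    · rintro ⟨hpF, hpG⟩
      obtain ⟨h1, h2, h3⟩ := (hFmem p).mp hpF
      refine ⟨h1, h2, h3, ?_⟩
      by_contra hne
      exact hpG (((hGmem p hpF).mpr hne))
  rw [hset, Set.ncard_coe_finset, Finset.card_sdiff_of_subset hGF]
  have hcF : (Fintype.piFinset F).card = n.factorial := by
    rw [Fintype.card_piFinset]
    have hcard : ∀ i : Fin n, (F i).card =
        (fun k => if k + 1 < s then k + 2 else if k + 1 = s then 1 else k + 1) ((i : ℕ)) := by
      intro i
      simp only [hF]
      split_ifs with h1 h2 <;> simp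
    calc (∏ i : Fin n, (F i).card)
        = ∏ i : Fin n,
            (fun k => if k + 1 < s then k + 2 else if k + 1 = s then 1 else k + 1) ((i : ℕ)) :=
          Finset.prod_congr rfl fun i _ => hcard i
      _ = ∏ i ∈ Finset.range n,
            (if i + 1 < s then i + 2 else if i + 1 = s then 1 else i + 1) :=
          Fin.prod_univ_eq_prod_range
            (fun k => if k + 1 < s then k + 2 else if k + 1 = s then 1 else k + 1) n
      _ = n.factorial := prod_c s hs1 n (by omega)
  have hcG : (Fintype.piFinset G).card = s * (n - 1).factorial := by
    rw [Fintype.card_piFinset]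
    have hcard : ∀ i : Fin n, (G i).card =
        (fun k => if k + 1 < s then k + 2 else if k + 1 = s then 1 else k) ((i : ℕ)) := by
      intro i
      simp only [hG]
      split_ifs with h1 h2 <;> simp
    calc (∏ i : Fin n, (G i).card)
        = ∏ i : Fin n,
            (fun k => if k + 1 < s then k + 2 else if k + 1 = s then 1 else k) ((i : ℕ)) :=
          Finset.prod_congr rfl fun i _ => hcard i
      _ = ∏ i ∈ Finset.range n,
            (if i + 1 < s then i + 2 else if i + 1 = s then 1 else i) :=
          Fin.prod_univ_eq_prod_range
            (fun k => if k + 1 < s then k + 2 else if k + 1 = s then 1 else k) n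
      _ = s * (n - 1).factorial := prod_d s hs1 n (by omega)
  rw [hcF, hcG, ← Nat.mul_factorial_pred (show n ≠ 0 by omega), Nat.sub_mul]
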